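/- Let P₁, …, Pₙ be lattice polytopes in ℤ^d with each L_{Pⱼ} containing the origin, and let P = (P₁,…,Pₙ). Then the index of the Cayley polytope 𝒞(P) (with respect to the ambient lattice ℤ^d × Λ^{n-1}) equals ind(P) := [ℤ^d ∩ (L_P ⊗ ℝ) : L_P]. -/

import Mathlib

noncomputable section

/-- Coordinatewise cast `ℤ → ℝ`, as an additive group homomorphism. -/
def castH {ι : Type*} : (ι → ℤ) →+ (ι → ℝ) where
  toFun z := fun i => (z i : ℝ)
  map_zero' := by funext i; simp
  map_add' x y := by funext i; simp

/-- The affine lattice spanned by a finite set of points: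
all integer affine combinations of the points. -/
def affLat {M : Type*} [AddCommGroup M] (S : Finset M) : Set M :=
  {z | ∃ a : M → ℤ, (∑ x ∈ S, a x) = 1 ∧ (∑ x ∈ S, a x • x) = z}

/-- Span of a product set containing the origin in each factor. -/
lemma span_prod_set {R M N : Type*} [CommRing R] [AddCommGroup M] [AddCommGroup N]
    [Module R M] [Module R N] {s : Set M} {t : Set N} (hs : (0 : M) ∈ s)
    (ht : (0 : N) ∈ t) :
    Submodule.span R (s ×ˢ t) = (Submodule.span R s).prod (Submodule.span R t) := by
  apply le_antisymm
  · rw [Submodule.span_le]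
    rintro ⟨a, b⟩ ⟨ha, hb⟩
    exact ⟨Submodule.subset_span ha, Submodule.subset_span hb⟩
  · rw [← LinearMap.span_inl_union_inr]
    apply Submodule.span_mono
    rintro z (⟨a, ha, rfl⟩ | ⟨b, hb, rfl⟩)
    · exact ⟨ha, ht⟩
    · exact ⟨hs, hb⟩

/-- Relative index of a product of subgroups with shared second factor. -/
lemma relindex_prod_self {G G' : Type*} [AddCommGroup G] [AddCommGroup G']
    (H K : AddSubgroup G) (A : AddSubgroup G') :
    (H.prod A).relIndex (K.prod A) = H.relIndex K := by
  classical
  set H' := H.addSubgroupOf K with hH'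
  let ψ : ↥(K.prod A) →+ ↥K :=
    { toFun := fun p => ⟨p.1.1, p.2.1⟩
      map_zero' := rfl
      map_add' := fun p q => rfl }
  let φ : ↥(K.prod A) →+ ↥K ⧸ H' := (QuotientAddGroup.mk' H').comp ψ
  have hker : ((H.prod A).addSubgroupOf (K.prod A)) = φ.ker := by
    ext p
    have hp2 : p.1.2 ∈ A := p.2.2
    simp only [AddSubgroup.mem_addSubgroupOf, AddSubgroup.mem_prod, AddMonoidHom.mem_ker,
      φ, ψ, AddMonoidHom.comp_apply, QuotientAddGroup.mk'_apply,
      QuotientAddGroup.eq_zero_iff, hH', AddMonoidHom.coe_mk, ZeroHom.coe_mk]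
    exact ⟨fun h => h.1, fun h => ⟨h, hp2⟩⟩
  have hsurj : Function.Surjective φ := by
    intro q
    obtain ⟨k, rfl⟩ := QuotientAddGroup.mk'_surjective H' q
    exact ⟨⟨(k.1, 0), ⟨k.2, A.zero_mem⟩⟩, rfl⟩
  have hrange : φ.range = ⊤ := AddMonoidHom.range_eq_top.mpr hsurj
  rw [AddSubgroup.relIndex, hker, AddSubgroup.index_ker, hrange]
  rw [Nat.card_congr AddSubgroup.topEquiv.toEquiv]
  rfl

/-- the index of the Cayley polytope `𝒞(P)` of lattice polytopes
`P₁, …, Pₙ ⊆ ℤ^d` (each with `0 ∈ L_{Pⱼ}`) with respect to the ambient lattice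
`ℤ^d × Λ^{n-1}` equals `ind(P) = [ℤ^d ∩ (L_P ⊗ ℝ) : L_P]`.  Indices of affine lattices
are computed on the corresponding groups of translations (differences), via `relindex`. -/
theorem stmt_2 (d n : ℕ) (hn : 0 < n) (V : Fin n → Finset (Fin d → ℤ))
    (hV : ∀ j, (V j).Nonempty)
    (h0 : ∀ j, (0 : Fin d → ℤ) ∈ affLat (V j)) :
    -- `L_P` and its saturation `ℤ^d ∩ (L_P ⊗ ℝ)`
    let LP : AddSubgroup (Fin d → ℤ) :=
      AddSubgroup.closure (⋃ j, (V j : Set (Fin d → ℤ)))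
    let SP : AddSubgroup (Fin d → ℤ) :=
      AddSubgroup.comap castH
        (Submodule.span ℝ (castH '' (LP : Set (Fin d → ℤ)))).toAddSubgroup
    -- the vertex set of the Cayley polytope
    let C : Finset ((Fin d → ℤ) × (Fin n → ℤ)) :=
      Finset.univ.biUnion fun j => (V j).image fun w => (w, Pi.single j 1)
    -- translations of the affine lattice `L_{𝒞(P)}` spanned by the vertices
    let DC : AddSubgroup ((Fin d → ℤ) × (Fin n → ℤ)) :=
      AddSubgroup.closure {z | ∃ a ∈ C, ∃ b ∈ C, z = a - b}
    -- translations of the ambient affine lattice `ℤ^d × Λ^{n-1}` lying in `AffSpan 𝒞(P)`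
    let KC : AddSubgroup ((Fin d → ℤ) × (Fin n → ℤ)) :=
      (AddSubgroup.comap ((AddMonoidHom.mk' (fun y : Fin n → ℤ => ∑ i, y i)
          (by intro a b; simp [Finset.sum_add_distrib])).comp
            (AddMonoidHom.snd (Fin d → ℤ) (Fin n → ℤ))) ⊥) ⊓
        AddSubgroup.comap (castH.prodMap castH)
          (Submodule.span ℝ ((castH.prodMap castH) '' (DC : Set _))).toAddSubgroup
    DC.relIndex KC = LP.relIndex SP := by
  intro LP SP C DC KC
  classical
  -- the root lattice `A = {y : ∑ y = 0}`
  set A : AddSubgroup (Fin n → ℤ) :=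
    AddMonoidHom.ker (AddMonoidHom.mk' (fun y : Fin n → ℤ => ∑ i, y i)
      (by intro a b; simp [Finset.sum_add_distrib])) with hA
  have hmemA : ∀ y : Fin n → ℤ, y ∈ A ↔ (∑ i, y i) = 0 := fun y => Iff.rfl
  -- membership in C
  have hmemC : ∀ z, z ∈ C ↔ ∃ j, ∃ w ∈ V j, z = (w, Pi.single j 1) := by
    intro z
    simp only [C, Finset.mem_biUnion, Finset.mem_image, Finset.mem_univ, true_and]
    constructor
    · rintro ⟨j, w, hw, rfl⟩; exact ⟨j, w, hw, rfl⟩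
    · rintro ⟨j, w, hw, rfl⟩; exact ⟨j, w, hw, rfl⟩
  -- vertices lie in LP
  have hVL : ∀ j, ∀ w ∈ V j, w ∈ LP := fun j w hw =>
    AddSubgroup.subset_closure (Set.mem_iUnion.mpr ⟨j, hw⟩)
  have hsum_single : ∀ j : Fin n, (∑ i, Pi.single j 1 i) = (1 : ℤ) := by
    intro j
    simp [Pi.single_apply]
  -- (w, 0) ∈ DC for each vertex w
  have key1 : ∀ j, ∀ w ∈ V j, ((w, (0 : Fin n → ℤ)) : (Fin d → ℤ) × (Fin n → ℤ)) ∈ DC := by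
    intro j w hw
    obtain ⟨a, ha1, ha0⟩ := h0 j
    have : ((w, (0 : Fin n → ℤ)) : (Fin d → ℤ) × (Fin n → ℤ)) =
        ∑ x ∈ V j, a x • ((w, Pi.single j 1) - (x, Pi.single j 1)) := by
      rw [Prod.ext_iff]
      constructor
      · simp only [Prod.fst_sum, Prod.smul_fst, Prod.fst_sub, smul_sub,
          Finset.sum_sub_distrib, ha0, sub_zero, ← Finset.sum_smul, ha1, one_smul]
      · simp [Prod.snd_sum]
    rw [this]
    apply AddSubgroup.sum_mem
    intro x hx
    apply AddSubgroup.zsmul_mem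
    apply AddSubgroup.subset_closure
    exact ⟨(w, Pi.single j 1), (hmemC _).mpr ⟨j, w, hw, rfl⟩,
      (x, Pi.single j 1), (hmemC _).mpr ⟨j, x, hx, rfl⟩, rfl⟩
  -- (x, 0) ∈ DC for every x ∈ LP
  have hx0 : ∀ x ∈ LP, ((x, (0 : Fin n → ℤ)) : (Fin d → ℤ) × (Fin n → ℤ)) ∈ DC := by
    intro x hx
    have : LP ≤ AddSubgroup.comap (AddMonoidHom.inl (Fin d → ℤ) (Fin n → ℤ)) DC := by
      rw [AddSubgroup.closure_le]
      rintro w hw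
      obtain ⟨_, ⟨j, rfl⟩, hwj⟩ := hw
      exact key1 j w hwj
    exact this hx
  -- (0, e_j - e_k) ∈ DC
  have hejk : ∀ j k : Fin n,
      (((0 : Fin d → ℤ), Pi.single j 1 - Pi.single k 1) : (Fin d → ℤ) × (Fin n → ℤ)) ∈ DC := by
    intro j k
    obtain ⟨w, hw⟩ := hV j
    obtain ⟨w', hw'⟩ := hV k
    have h1 : ((w, Pi.single j 1) - (w', Pi.single k 1) :
        (Fin d → ℤ) × (Fin n → ℤ)) ∈ DC :=
      AddSubgroup.subset_closure ⟨(w, Pi.single j 1), (hmemC _).mpr ⟨j, w, hw, rfl⟩,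
        (w', Pi.single k 1), (hmemC _).mpr ⟨k, w', hw', rfl⟩, rfl⟩
    have h2 := DC.sub_mem h1 (DC.sub_mem (key1 j w hw) (key1 k w' hw'))
    convert h2 using 1
    ext <;> simp
  -- (0, y) ∈ DC for every y ∈ A
  have hy0 : ∀ y ∈ A, (((0 : Fin d → ℤ), y) : (Fin d → ℤ) × (Fin n → ℤ)) ∈ DC := by
    intro y hy
    set j0 : Fin n := ⟨0, hn⟩
    have hyrep : y = ∑ j, y j • (Pi.single j 1 - Pi.single j0 1) := by
      have h1 : ∑ j, y j • (Pi.single j (1:ℤ) : Fin n → ℤ) = y := by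
        have : ∀ j : Fin n, y j • (Pi.single j (1:ℤ) : Fin n → ℤ) = Pi.single j (y j) := by
          intro j; ext i; simp [Pi.single_apply, mul_comm]
        simp only [this]
        exact Finset.univ_sum_single y
      have h2 : ∑ j, y j • (Pi.single j0 (1:ℤ) : Fin n → ℤ) = 0 := by
        rw [← Finset.sum_smul, (hmemA y).mp hy, zero_smul]
      simp only [smul_sub, Finset.sum_sub_distrib, h1, h2, sub_zero]
    have : (((0 : Fin d → ℤ), y) : (Fin d → ℤ) × (Fin n → ℤ)) =
        ∑ j, y j • (((0 : Fin d → ℤ), Pi.single j 1 - Pi.single j0 1) :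
          (Fin d → ℤ) × (Fin n → ℤ)) := by
      rw [Prod.ext_iff]
      constructor
      · simp [Prod.fst_sum]
      · simp only [Prod.snd_sum, Prod.smul_snd]
        exact hyrep
    rw [this]
    exact AddSubgroup.sum_mem _ fun j _ => AddSubgroup.zsmul_mem _ (hejk j j0) _
  -- DC = LP × A
  have hDC : DC = LP.prod A := by
    apply le_antisymm
    · rw [AddSubgroup.closure_le]
      rintro z ⟨a, ha, b, hb, rfl⟩
      obtain ⟨j, w, hw, rfl⟩ := (hmemC a).mp ha
      obtain ⟨k, w', hw', rfl⟩ := (hmemC b).mp hb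
      refine ⟨LP.sub_mem (hVL j w hw) (hVL k w' hw'), (hmemA _).mpr ?_⟩
      simp only [Prod.snd_sub, Pi.sub_apply, Finset.sum_sub_distrib, hsum_single, sub_self]
    · rintro ⟨x, y⟩ ⟨hx, hy⟩
      have : ((x, y) : (Fin d → ℤ) × (Fin n → ℤ)) = (x, 0) + (0, y) := by simp
      rw [this]
      exact DC.add_mem (hx0 x hx) (hy0 y hy)
  -- KC = SP × A
  have hKC : KC = SP.prod A := by
    have himg : (castH.prodMap castH) '' (DC : Set ((Fin d → ℤ) × (Fin n → ℤ))) =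
        (castH '' (LP : Set (Fin d → ℤ))) ×ˢ (castH '' (A : Set (Fin n → ℤ))) := by
      rw [hDC, Set.prod_image_image_eq]
      rfl
    have hspan : Submodule.span ℝ ((castH.prodMap castH) '' (DC : Set _)) =
        (Submodule.span ℝ (castH '' (LP : Set (Fin d → ℤ)))).prod
          (Submodule.span ℝ (castH '' (A : Set (Fin n → ℤ)))) := by
      rw [himg]
      exact span_prod_set ⟨0, LP.zero_mem, map_zero castH⟩ ⟨0, A.zero_mem, map_zero castH⟩
    ext ⟨x, y⟩
    simp only [KC, AddSubgroup.mem_inf, AddSubgroup.mem_comap, AddMonoidHom.comp_apply,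
      AddSubgroup.mem_bot, AddSubgroup.mem_prod, hspan]
    constructor
    · rintro ⟨hsum, h1, h2⟩
      refine ⟨h1, ?_⟩
      rw [hmemA]
      exact hsum
    · rintro ⟨hx, hy⟩
      refine ⟨(hmemA y).mp hy, hx, ?_⟩
      exact Submodule.subset_span ⟨y, hy, rfl⟩
  rw [hDC, hKC, relindex_prod_self]
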